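/- Let p be a prime and let δ ∈ GL₂(ℤ_p) be congruent to the identity modulo p², and suppose the lower-left entry of δ has p-adic valuation exactly n₀ < ∞ (with n₀ ≥ 2). Then for every n ≥ n₀, the minimal positive integer k such that the lower-left entry of δ^k is divisible by pⁿ equals p^{n−n₀}; moreover the lower-left entry of δ^{p^{n−n₀}} has p-adic valuation exactly n. -/

import Mathlib

open Matrix Finset

section
variable {p : ℕ} [hp : Fact p.Prime]

lemma aux_pow_entry_dvd (q : ℤ_[p]) (M : Matrix (Fin 2) (Fin 2) ℤ_[p])
    (h : ∀ i j, q ∣ M i j) : ∀ (j : ℕ) (i i' : Fin 2), q ^ j ∣ (M ^ j) i i' := by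
  intro j
  induction j with
  | zero =>
    intro i i'
    simp only [pow_zero]
    by_cases hii : i = i' <;> simp [Matrix.one_apply, hii]
  | succ j ih =>
    intro i i'
    rw [pow_succ, pow_succ, Matrix.mul_apply]
    exact Finset.dvd_sum fun l _ => mul_dvd_mul (ih i l) (h l i')

lemma aux_corner (M : Matrix (Fin 2) (Fin 2) ℤ_[p])
    (h2 : ∀ i j, (p : ℤ_[p]) ^ 2 ∣ M i j) (n₀ : ℕ)
    (hc : (p : ℤ_[p]) ^ n₀ ∣ M 1 0) :
    ∀ j : ℕ, (p : ℤ_[p]) ^ (n₀ + 2 * j) ∣ (M ^ (j + 1)) 1 0 := by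
  intro j
  induction j with
  | zero => simpa using hc
  | succ j ih =>
    have hexp : (M ^ (j + 1 + 1)) 1 0 = (M ^ (j+1)) 1 0 * M 0 0 + (M ^ (j+1)) 1 1 * M 1 0 := by
      rw [pow_succ, Matrix.mul_apply, Fin.sum_univ_two]
    rw [hexp]
    have h1 : (p : ℤ_[p]) ^ (n₀ + 2 * (j+1)) ∣ (M ^ (j+1)) 1 0 * M 0 0 := by
      have := mul_dvd_mul ih (h2 0 0)
      rwa [← pow_add, show n₀ + 2 * j + 2 = n₀ + 2 * (j+1) by ring] at this
    have h2' : (p : ℤ_[p]) ^ (n₀ + 2 * (j+1)) ∣ (M ^ (j+1)) 1 1 * M 1 0 := by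
      have ha : ((p : ℤ_[p]) ^ 2) ^ (j+1) ∣ (M ^ (j+1)) 1 1 :=
        aux_pow_entry_dvd _ M h2 (j+1) 1 1
      have := mul_dvd_mul ha hc
      rwa [← pow_mul, ← pow_add, show 2 * (j+1) + n₀ = n₀ + 2 * (j+1) by ring] at this
    exact dvd_add h1 h2'

lemma aux_choose_nat (k m : ℕ) (hk : 0 < k) :
    p ^ padicValNat p k ∣ k.choose (m + 2) * p ^ (m + 1) := by
  have hpp := hp.out
  set j := m + 2 with hj
  set w := padicValNat p j with hw
  have hid : k * (k - 1).choose (m + 1) = k.choose j * j := by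
    have := Nat.add_one_mul_choose_eq (k - 1) (m + 1)
    rw [Nat.sub_add_cancel hk] at this
    simpa using this
  have hdvd1 : p ^ padicValNat p k ∣ k.choose j * j :=
    hid ▸ Dvd.dvd.mul_right pow_padicValNat_dvd _
  have hjpos : 0 < j := by omega
  have hfac : j.factorization p = w := Nat.factorization_def j hpp
  have hsplit : p ^ w * (j / p ^ w) = j := by
    rw [← hfac]
    exact Nat.ordProj_mul_ordCompl_eq_self j p
  have hm' : ¬ p ∣ (j / p ^ w) := by
    rw [← hfac]
    exact Nat.not_dvd_ordCompl hpp (by omega)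
  have hdvd2 : p ^ padicValNat p k ∣ k.choose j * p ^ w := by
    have h3 : p ^ padicValNat p k ∣ (k.choose j * p ^ w) * (j / p ^ w) := by
      rw [mul_assoc, hsplit]; exact hdvd1
    refine (Nat.Coprime.dvd_of_dvd_mul_right ?_ h3)
    exact ((Nat.Prime.coprime_iff_not_dvd hpp).2 hm').pow_left _
  have hwle : w ≤ m + 1 := by
    have h1 : p ^ w ≤ j := Nat.le_of_dvd hjpos (hw ▸ pow_padicValNat_dvd)
    have h2 : w < p ^ w := Nat.lt_pow_self hpp.one_lt
    omega
  exact hdvd2.trans (Nat.mul_dvd_mul_left _ (pow_dvd_pow p hwle))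

lemma aux_key (δ : GL (Fin 2) ℤ_[p])
    (hδ : ∀ i j : Fin 2, ((p : ℤ_[p]) ^ 2) ∣
      (((δ : Matrix (Fin 2) (Fin 2) ℤ_[p]) - 1) i j))
    (n₀ : ℕ)
    (hdvd : (p : ℤ_[p]) ^ n₀ ∣ (δ : Matrix (Fin 2) (Fin 2) ℤ_[p]) 1 0)
    (hndvd : ¬ (p : ℤ_[p]) ^ (n₀ + 1) ∣ (δ : Matrix (Fin 2) (Fin 2) ℤ_[p]) 1 0)
    (k : ℕ) (hk : 0 < k) :
    (p : ℤ_[p]) ^ (n₀ + padicValNat p k) ∣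
      ((δ ^ k : GL (Fin 2) ℤ_[p]) : Matrix (Fin 2) (Fin 2) ℤ_[p]) 1 0 ∧
    ¬ (p : ℤ_[p]) ^ (n₀ + padicValNat p k + 1) ∣
      ((δ ^ k : GL (Fin 2) ℤ_[p]) : Matrix (Fin 2) (Fin 2) ℤ_[p]) 1 0 := by
  have hpp := hp.out
  have hp0 : (p : ℤ_[p]) ≠ 0 := Nat.cast_ne_zero.mpr hpp.ne_zero
  set A : Matrix (Fin 2) (Fin 2) ℤ_[p] := (δ : Matrix (Fin 2) (Fin 2) ℤ_[p]) with hAdef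
  set M : Matrix (Fin 2) (Fin 2) ℤ_[p] := A - 1 with hMdef
  set v := padicValNat p k with hv
  have hM10 : M 1 0 = A 1 0 := by
    simp [hMdef, Matrix.sub_apply, Matrix.one_apply]
  have hcoe : ((δ ^ k : GL (Fin 2) ℤ_[p]) : Matrix (Fin 2) (Fin 2) ℤ_[p]) = A ^ k := by
    rw [hAdef]; exact Units.val_pow_eq_pow_val δ k
  have hterm : ∀ (X : Matrix (Fin 2) (Fin 2) ℤ_[p]) (c : ℕ),
      (X * (c : Matrix (Fin 2) (Fin 2) ℤ_[p])) 1 0 = (c : ℤ_[p]) * X 1 0 := by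
    intro X c
    rw [← Matrix.diagonal_natCast, Matrix.mul_diagonal, mul_comm]
  have hexp : (A ^ k) 1 0 = ∑ j ∈ Finset.range (k+1), (k.choose j : ℤ_[p]) * (M ^ j) 1 0 := by
    have hA : A = M + 1 := by rw [hMdef]; abel
    rw [hA, (Commute.one_right M).add_pow, Matrix.sum_apply]
    refine Finset.sum_congr rfl fun j _ => ?_
    rw [one_pow, mul_one, hterm]
  set f : ℕ → ℤ_[p] := fun j => (k.choose j : ℤ_[p]) * (M ^ j) 1 0 with hf
  have hsplit : ∑ j ∈ Finset.range (k+1), f j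
      = f 0 + f 1 + ∑ j ∈ Finset.Ico 2 (k+1), f j := by
    rw [Finset.range_eq_Ico, ← Finset.sum_Ico_consecutive f (Nat.zero_le 2) (by omega : 2 ≤ k+1)]
    congr 1
    rw [← Finset.range_eq_Ico, Finset.sum_range_succ, Finset.sum_range_one]
  have hf0 : f 0 = 0 := by
    simp [hf, Matrix.one_apply]
  have hf1 : f 1 = (k : ℤ_[p]) * M 1 0 := by
    simp [hf]
  set T := ∑ j ∈ Finset.Ico 2 (k+1), f j with hT
  have hTdvd : (p : ℤ_[p]) ^ (n₀ + v + 1) ∣ T := by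
    refine Finset.dvd_sum fun j hj => ?_
    rw [Finset.mem_Ico] at hj
    obtain ⟨m, rfl⟩ : ∃ m, j = m + 2 := ⟨j - 2, by omega⟩
    have h1 : (p : ℤ_[p]) ^ v ∣ (k.choose (m+2) : ℤ_[p]) * (p : ℤ_[p]) ^ (m+1) := by
      obtain ⟨y, hy⟩ := aux_choose_nat (p := p) k m hk
      refine ⟨(y : ℤ_[p]), ?_⟩
      exact_mod_cast congrArg (Nat.cast : ℕ → ℤ_[p]) hy
    have h2 : (p : ℤ_[p]) ^ (n₀ + 2 * (m+1)) ∣ (M ^ (m+2)) 1 0 :=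
      aux_corner M (by intro i j; simpa [hMdef, hAdef] using hδ i j) n₀
        (by rw [hM10]; exact hdvd) (m+1)
    have h3 : (p : ℤ_[p]) ^ (v + (n₀ + 2 * (m+1))) ∣
        (f (m+2)) * (p : ℤ_[p]) ^ (m+1) := by
      have := mul_dvd_mul h1 h2
      rw [← pow_add] at this
      have heq : ((k.choose (m+2) : ℤ_[p]) * (p : ℤ_[p]) ^ (m+1)) * (M ^ (m+2)) 1 0
          = (f (m+2)) * (p : ℤ_[p]) ^ (m+1) := by rw [hf]; ring
      rwa [heq] at this
    obtain ⟨z, hz⟩ := h3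
    refine ⟨(p : ℤ_[p]) ^ m * z, ?_⟩
    apply mul_right_cancel₀ (pow_ne_zero (m+1) hp0)
    rw [hz]; ring
  have hmain : ((δ ^ k : GL (Fin 2) ℤ_[p]) : Matrix (Fin 2) (Fin 2) ℤ_[p]) 1 0
      = (k : ℤ_[p]) * M 1 0 + T := by
    rw [hcoe, hexp, hsplit, hf0, hf1]
    ring
  -- factorizations
  obtain ⟨c₀, hc₀⟩ := hdvd
  have hpc₀ : ¬ (p : ℤ_[p]) ∣ c₀ := by
    intro ⟨t, ht⟩
    exact hndvd ⟨t, by rw [hc₀, ht, pow_succ]; ring⟩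
  have hfac : (p : ℕ) ^ v * (k / p ^ v) = k := by
    rw [hv, ← Nat.factorization_def k hpp]
    exact Nat.ordProj_mul_ordCompl_eq_self k p
  set m' := k / p ^ v with hm'def
  have hm' : ¬ p ∣ m' := by
    rw [hm'def, hv, ← Nat.factorization_def k hpp]
    exact Nat.not_dvd_ordCompl hpp hk.ne'
  have hkc : (k : ℤ_[p]) * M 1 0 = (p : ℤ_[p]) ^ (n₀ + v) * ((m' : ℤ_[p]) * c₀) := by
    have hkcast : (k : ℤ_[p]) = (p : ℤ_[p]) ^ v * (m' : ℤ_[p]) := by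
      exact_mod_cast congrArg (Nat.cast : ℕ → ℤ_[p]) hfac.symm
    rw [hkcast, hM10, hc₀]; ring
  constructor
  · rw [hmain]
    refine dvd_add ⟨(m' : ℤ_[p]) * c₀, hkc⟩ ((pow_dvd_pow _ (by omega)).trans hTdvd)
  · intro hcon
    rw [hmain] at hcon
    have h4 : (p : ℤ_[p]) ^ (n₀ + v + 1) ∣ (k : ℤ_[p]) * M 1 0 :=
      (dvd_add_right hTdvd).mp (by rwa [add_comm ((k : ℤ_[p]) * M 1 0) T] at hcon)
    rw [hkc, pow_succ] at h4
    have h5 : (p : ℤ_[p]) ∣ (m' : ℤ_[p]) * c₀ :=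
      (mul_dvd_mul_iff_left (pow_ne_zero (n₀ + v) hp0)).mp h4
    rcases (PadicInt.prime_p).2.2 _ _ h5 with h6 | h6
    · have h7 : ‖((m' : ℤ) : ℤ_[p])‖ < 1 :=
        (PadicInt.norm_lt_one_iff_dvd _).mpr (by exact_mod_cast h6)
      have h8 : (p : ℤ) ∣ (m' : ℤ) := (PadicInt.norm_int_lt_one_iff_dvd _).mp h7
      exact hm' (Int.natCast_dvd_natCast.mp h8)
    · exact hpc₀ h6
end

/-- Let `δ ∈ GL₂(ℤ_p)` be congruent to the identity mod `p²` with lower-left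
entry of p-adic valuation exactly `n₀` (`2 ≤ n₀`).  Then for every `n ≥ n₀`, the minimal
positive `k` such that `pⁿ` divides the lower-left entry of `δ^k` is `p^(n-n₀)`; moreover the
lower-left entry of `δ^(p^(n-n₀))` has valuation exactly `n`. -/
theorem stmt_4 (p : ℕ) [Fact p.Prime] (δ : GL (Fin 2) ℤ_[p])
    (hδ : ∀ i j : Fin 2, ((p : ℤ_[p]) ^ 2) ∣
      (((δ : Matrix (Fin 2) (Fin 2) ℤ_[p]) - 1) i j))
    (n₀ : ℕ) (hn₀ : 2 ≤ n₀)
    (hdvd : (p : ℤ_[p]) ^ n₀ ∣ (δ : Matrix (Fin 2) (Fin 2) ℤ_[p]) 1 0)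
    (hndvd : ¬ (p : ℤ_[p]) ^ (n₀ + 1) ∣ (δ : Matrix (Fin 2) (Fin 2) ℤ_[p]) 1 0) :
    ∀ n : ℕ, n₀ ≤ n →
      IsLeast {k : ℕ | 0 < k ∧
          (p : ℤ_[p]) ^ n ∣ ((δ ^ k : GL (Fin 2) ℤ_[p]) : Matrix (Fin 2) (Fin 2) ℤ_[p]) 1 0}
        (p ^ (n - n₀))
      ∧ ¬ (p : ℤ_[p]) ^ (n + 1) ∣
          ((δ ^ (p ^ (n - n₀)) : GL (Fin 2) ℤ_[p]) : Matrix (Fin 2) (Fin 2) ℤ_[p]) 1 0 := by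
  intro n hn
  have hppos : 0 < p ^ (n - n₀) := pow_pos (Fact.out (p := p.Prime)).pos _
  have hvk : padicValNat p (p ^ (n - n₀)) = n - n₀ := padicValNat.prime_pow _
  have hkey := aux_key δ hδ n₀ hdvd hndvd (p ^ (n - n₀)) hppos
  rw [hvk, show n₀ + (n - n₀) = n by omega] at hkey
  refine ⟨⟨⟨hppos, hkey.1⟩, ?_⟩, hkey.2⟩
  rintro k ⟨hk0, hkdvd⟩
  have hkk := aux_key δ hδ n₀ hdvd hndvd k hk0
  have hle : n ≤ n₀ + padicValNat p k := by
    by_contra h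
    exact hkk.2 ((pow_dvd_pow _ (by omega)).trans hkdvd)
  exact Nat.le_of_dvd hk0 ((pow_dvd_pow p (by omega)).trans pow_padicValNat_dvd)
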